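/- arXiv:1210.2142 — 4 statements merged into one kernel-verified Lean document; each statement's English description precedes it below -/
import Mathlib

section
/- Suppose G is a connected simple graph with no K_5 minor, G is not isomorphic to C_5, G is not dynamically 4-colorable, and |E(G)| is minimum among all graphs with these properties. Then G is 2-connected. -/
open SimpleGraph

/-- A dynamic coloring: a proper coloring with `k` colors such that every vertex
with at least two neighbors has two neighbors with distinct colors. -/
def IsDynamicColoring {V : Type} (G : SimpleGraph V) {k : ℕ} (c : V → Fin k) : Prop :=
  (∀ u v : V, G.Adj u v → c u ≠ c v) ∧
    ∀ v : V, 2 ≤ (G.neighborSet v).ncard →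
      ∃ u w : V, G.Adj v u ∧ G.Adj v w ∧ c u ≠ c w

/-- A graph is dynamically `k`-colorable if it admits a dynamic `k`-coloring. -/
def DynamicColorable {V : Type} (G : SimpleGraph V) (k : ℕ) : Prop :=
  ∃ c : V → Fin k, IsDynamicColoring G c
/-- `H` is a minor of `G`: there is a family of nonempty, pairwise disjoint,
connected branch sets in `G`, one for each vertex of `H`, such that branch sets of
adjacent vertices of `H` are joined by an edge of `G`. -/
def HasMinor {V W : Type} (G : SimpleGraph V) (H : SimpleGraph W) : Prop :=
  ∃ B : W → Set V,
    (∀ w : W, (B w).Nonempty) ∧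
      (∀ w : W, (G.induce (B w)).Connected) ∧
        (Pairwise fun w₁ w₂ => Disjoint (B w₁) (B w₂)) ∧
          ∀ ⦃w₁ w₂ : W⦄, H.Adj w₁ w₂ → ∃ u ∈ B w₁, ∃ v ∈ B w₂, G.Adj u v
/-- `G` is a counterexample with the minimum number of edges: `G` is connected,
has no `K₅` minor, is not isomorphic to `C₅`, is not dynamically `4`-colorable,
and has the fewest edges among all finite graphs with these properties. -/
def MinCounterexample {V : Type} [Fintype V] (G : SimpleGraph V) : Prop :=
  G.Connected ∧ ¬ HasMinor G (⊤ : SimpleGraph (Fin 5)) ∧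
    ¬ Nonempty (G ≃g SimpleGraph.cycleGraph 5) ∧ ¬ DynamicColorable G 4 ∧
      ∀ (W : Type) [Fintype W] (H : SimpleGraph W),
        (H.Connected ∧ ¬ HasMinor H (⊤ : SimpleGraph (Fin 5)) ∧
          ¬ Nonempty (H ≃g SimpleGraph.cycleGraph 5) ∧ ¬ DynamicColorable H 4) →
        G.edgeSet.ncard ≤ H.edgeSet.ncard

/-! ### Auxiliary lemmas -/

set_option maxRecDepth 10000 in
lemma perm_exists : ∀ x y z w : Fin 4, z ≠ x →
    ∃ σ : Equiv.Perm (Fin 4), σ x = y ∧ σ z ≠ w := by decide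

set_option maxRecDepth 100000 in
lemma c5_col : ∀ j : Fin 5, ∃ c : Fin 5 → Fin 4,
    (∀ x y, (cycleGraph 5).Adj x y → c x ≠ c y) ∧
    ∀ x, x ≠ j → ∃ y z, (cycleGraph 5).Adj x y ∧ (cycleGraph 5).Adj x z ∧ c y ≠ c z := by decide

lemma reachable_induce_of_walk {V : Type} {G : SimpleGraph V} {S : Set V} {x y : V}
    (p : G.Walk x y) (hp : ∀ w ∈ p.support, w ∈ S) (hx : x ∈ S) (hy : y ∈ S) :
    (G.induce S).Reachable ⟨x, hx⟩ ⟨y, hy⟩ := by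
  induction p with
  | nil => rfl
  | @cons a b c h q ih =>
    have hb : b ∈ S := hp b (by simp)
    have hadj : (G.induce S).Adj ⟨a, hx⟩ ⟨b, hb⟩ := by simpa using h
    exact hadj.reachable.trans (ih (fun w hw => hp w (by simp [hw])) hb hy)

noncomputable def induceInduceIso {V : Type} (G : SimpleGraph V) (S : Set V) (T : Set ↥S) :
    (G.induce S).induce T ≃g G.induce (Subtype.val '' T) where
  toEquiv := Equiv.Set.image Subtype.val T Subtype.val_injective
  map_rel_iff' := by
    intro a b
    simp [Equiv.Set.image_apply]

lemma hasMinor_of_induce {V : Type} {G : SimpleGraph V} {S : Set V} {W : Type}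
    {H : SimpleGraph W} (h : HasMinor (G.induce S) H) : HasMinor G H := by
  obtain ⟨B, hne, hconn, hdisj, hadj⟩ := h
  refine ⟨fun w => Subtype.val '' B w, fun w => (hne w).image _, fun w => ?_,
    fun w₁ w₂ hw => Set.disjoint_image_of_injective Subtype.val_injective (hdisj hw),
    fun w₁ w₂ hw => ?_⟩
  · exact (induceInduceIso G S (B w)).connected_iff.mp (hconn w)
  · obtain ⟨u, hu, v, hv, huv⟩ := hadj hw
    exact ⟨u.1, Set.mem_image_of_mem _ hu, v.1, Set.mem_image_of_mem _ hv, huv⟩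

lemma edge_ncard_lt {V : Type} [Fintype V] {G : SimpleGraph V} {S : Set V} {a b : V}
    (hab : G.Adj a b) (hb : b ∉ S) :
    (G.induce S).edgeSet.ncard < G.edgeSet.ncard := by
  have hinj : Function.Injective (Sym2.map (Subtype.val : ↥S → V)) :=
    Sym2.map.injective Subtype.val_injective
  have hsub : Sym2.map (Subtype.val : ↥S → V) '' (G.induce S).edgeSet ⊂ G.edgeSet := by
    constructor
    · rintro e ⟨e', he', rfl⟩
      induction e' with
      | h x y =>
        simp only [SimpleGraph.mem_edgeSet] at he' ⊢
        exact he'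
    · intro hall
      have : s(a, b) ∈ Sym2.map (Subtype.val : ↥S → V) '' (G.induce S).edgeSet :=
        hall (by simpa using hab)
      obtain ⟨e', _, he⟩ := this
      induction e' with
      | h x y =>
        simp only [Sym2.map_pair_eq, Sym2.eq, Sym2.rel_iff', Prod.mk.injEq, Prod.swap_prod_mk]
          at he
        rcases he with ⟨h1, h2⟩ | ⟨h1, h2⟩
        · exact hb (h2 ▸ y.2)
        · exact hb (h1 ▸ x.2)
  calc (G.induce S).edgeSet.ncard
      = (Sym2.map (Subtype.val : ↥S → V) '' (G.induce S).edgeSet).ncard :=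
        (Set.ncard_image_of_injective _ hinj).symm
    _ < G.edgeSet.ncard := Set.ncard_lt_ncard hsub (Set.toFinite _)

lemma takeUntil_avoid {V : Type} [DecidableEq V] {G : SimpleGraph V} {x v : V}
    (p : G.Walk x v) (hc : p.support.count v = 1) {w : V} (hw : w ∈ p.support) (hwv : w ≠ v) :
    v ∉ (p.takeUntil w hw).support := by
  intro hv
  have hsupp : p.support = (p.takeUntil w hw).support ++ (p.dropUntil w hw).support.tail := by
    conv_lhs => rw [← p.take_spec hw]
    exact Walk.support_append _ _
  have hvtail : v ∈ (p.dropUntil w hw).support.tail := by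
    have h1 := (p.dropUntil w hw).end_mem_support
    rw [Walk.support_eq_cons] at h1
    rcases List.mem_cons.mp h1 with h1 | h1
    · exact absurd h1.symm hwv
    · exact h1
  rw [hsupp, List.count_append] at hc
  have h2 := List.count_pos_iff.mpr hv
  have h3 := List.count_pos_iff.mpr hvtail
  omega

lemma walk_to_v {V : Type} [DecidableEq V] {G : SimpleGraph V} (hconn : G.Connected) (z v : V) :
    ∃ p : G.Walk z v, ∀ w ∈ p.support, w ≠ v →
      ∃ q : G.Walk z w, ∀ t ∈ q.support, t ≠ v := by
  obtain ⟨q0⟩ := hconn.preconnected z v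
  have hm : v ∈ q0.support := q0.end_mem_support
  refine ⟨q0.takeUntil v hm, fun w hw hwv => ?_⟩
  have hc : (q0.takeUntil v hm).support.count v = 1 :=
    q0.count_support_takeUntil_eq_one hm
  refine ⟨(q0.takeUntil v hm).takeUntil w hw, fun t ht htv => ?_⟩
  exact takeUntil_avoid _ hc hw hwv (htv ▸ ht)

lemma exists_nbr {V : Type} {G : SimpleGraph V} {x y : V} (p : G.Walk x y) (h : x ≠ y) :
    ∃ u, G.Adj x u ∧ u ∈ p.support := by
  cases p with
  | nil => exact absurd rfl h
  | cons hadj q => exact ⟨_, hadj, by simp⟩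

lemma side_coloring {V : Type} {G : SimpleGraph V} {v : V} {S : Set V} (hvS : v ∈ S)
    (hcl : ∀ x : ↥S, x.1 ≠ v → G.neighborSet x.1 ⊆ S)
    (h : Nonempty ((G.induce S) ≃g cycleGraph 5) ∨ DynamicColorable (G.induce S) 4) :
    ∃ c : ↥S → Fin 4, (∀ x y : ↥S, G.Adj x.1 y.1 → c x ≠ c y) ∧
      (∀ x : ↥S, x.1 ≠ v → 2 ≤ (G.neighborSet x.1).ncard →
        ∃ y z : ↥S, G.Adj x.1 y.1 ∧ G.Adj x.1 z.1 ∧ c y ≠ c z) := by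
  rcases h with hiso | hdynS
  · obtain ⟨φ⟩ := hiso
    obtain ⟨c0, hc0p, hc0d⟩ := c5_col (φ ⟨v, hvS⟩)
    refine ⟨fun x => c0 (φ x), fun x y hxy =>
      hc0p _ _ (φ.map_rel_iff.mpr (by simpa using hxy)), ?_⟩
    intro x hxv _
    have hxj : φ x ≠ φ ⟨v, hvS⟩ := fun h => hxv (congrArg Subtype.val (φ.injective h))
    obtain ⟨y, z, hy, hz, hyz⟩ := hc0d (φ x) hxj
    have hy' : (G.induce S).Adj x (φ.symm y) :=
      φ.map_rel_iff.mp (by rwa [φ.apply_symm_apply])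
    have hz' : (G.induce S).Adj x (φ.symm z) :=
      φ.map_rel_iff.mp (by rwa [φ.apply_symm_apply])
    refine ⟨φ.symm y, φ.symm z, by simpa using hy', by simpa using hz', ?_⟩
    simpa [φ.apply_symm_apply] using hyz
  · obtain ⟨c, hp, hd⟩ := hdynS
    refine ⟨c, fun x y h => hp x y (by simpa using h), ?_⟩
    intro x hxv hcard
    have hsub := hcl x hxv
    have himg : Subtype.val '' ((G.induce S).neighborSet x) = G.neighborSet x.1 := by
      ext w
      constructor
      · rintro ⟨w', hw', rfl⟩
        simpa using hw'
      · intro hw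
        exact ⟨⟨w, hsub hw⟩, by simpa using hw, rfl⟩
    have heq : ((G.induce S).neighborSet x).ncard = (G.neighborSet x.1).ncard := by
      rw [← himg, Set.ncard_image_of_injective _ Subtype.val_injective]
    obtain ⟨y, z, hy, hz, hyz⟩ := hd x (by rw [heq]; exact hcard)
    exact ⟨y, z, by simpa using hy, by simpa using hz, hyz⟩

/-- A minimum counterexample is `2`-connected: it has more than two vertices and
deleting any single vertex leaves a connected graph. -/
theorem min_counterexample_two_connected {V : Type} [Fintype V] (G : SimpleGraph V)
    (hG : MinCounterexample G) :
    2 < Fintype.card V ∧ ∀ v : V, (G.induce ({v}ᶜ : Set V)).Connected := by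
  classical
  obtain ⟨hconn, hminor, hc5, hdyn, hmin⟩ := hG
  have hcard : 4 < Fintype.card V := by
    by_contra hle
    push_neg at hle
    obtain ⟨f⟩ := Function.Embedding.nonempty_of_card_le (α := V) (β := Fin 4)
      (by simpa using hle)
    refine hdyn ⟨f, fun u w huw h => huw.ne (f.injective h), fun z hz => ?_⟩
    obtain ⟨u, hu, w, hw, huw⟩ := (Set.one_lt_ncard (s := G.neighborSet z) (Set.toFinite _)).mp (by omega)
    exact ⟨u, w, hu, hw, fun h => huw (f.injective h)⟩
  refine ⟨by omega, fun v => ?_⟩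
  by_contra hncon
  have hne : Nonempty ↥({v}ᶜ : Set V) := by
    obtain ⟨u, hu⟩ := Fintype.exists_ne_of_one_lt_card (by omega) v
    exact ⟨⟨u, Set.mem_compl_singleton_iff.mpr hu⟩⟩
  have hpre : ¬ (G.induce ({v}ᶜ : Set V)).Preconnected := fun h =>
    hncon ((connected_iff _).mpr ⟨h, hne⟩)
  obtain ⟨x, y, hxy⟩ : ∃ x y : ↥({v}ᶜ : Set V),
      ¬ (G.induce ({v}ᶜ : Set V)).Reachable x y := by
    by_contra h
    push_neg at h
    exact hpre h
  obtain ⟨a, ha⟩ := x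
  obtain ⟨b, hb⟩ := y
  have hav : a ≠ v := Set.mem_compl_singleton_iff.mp ha
  have hbv : b ≠ v := Set.mem_compl_singleton_iff.mp hb
  -- the "component" of a in G - v
  obtain ⟨A, hA⟩ : ∃ A : Set V, ∀ u,
      u ∈ A ↔ ∃ q : G.Walk a u, ∀ t ∈ q.support, t ≠ v :=
    ⟨_, fun u => Iff.rfl⟩
  have hvA : v ∉ A := by
    intro h
    obtain ⟨p, hp⟩ := (hA v).mp h
    exact hp v p.end_mem_support rfl
  have hbA : b ∉ A := by
    intro h
    obtain ⟨p, hp⟩ := (hA b).mp h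
    exact hxy (reachable_induce_of_walk p
      (fun w hw => Set.mem_compl_singleton_iff.mpr (hp w hw)) ha hb)
  have cross : ∀ ⦃u w : V⦄, u ∈ A → G.Adj u w → w ≠ v → w ∈ A := by
    intro u w huA hadj hwv
    obtain ⟨p, hp⟩ := (hA u).mp huA
    refine (hA w).mpr ⟨p.concat hadj, fun t ht => ?_⟩
    rw [Walk.support_concat] at ht
    rcases List.mem_append.mp ht with h | h
    · exact hp t h
    · rwa [List.mem_singleton.mp h]
  have hvS1 : v ∈ insert v A := Set.mem_insert _ _
  have haA : a ∈ A := (hA a).mpr ⟨Walk.nil, by simpa using hav⟩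
  have haS1 : a ∈ insert v A := Set.mem_insert_of_mem _ haA
  -- a walk from a to v whose support stays in insert v A
  obtain ⟨pa, hpa⟩ := walk_to_v hconn a v
  have hpaS1 : ∀ w ∈ pa.support, w ∈ insert v A := by
    intro w hw
    by_cases hwv : w = v
    · exact hwv ▸ hvS1
    · exact Set.mem_insert_of_mem _ ((hA w).mpr (hpa w hw hwv))
  -- neighbor of v inside A
  obtain ⟨u1, hu1adj, hu1mem⟩ := exists_nbr pa.reverse (Ne.symm hav)
  have hu1A : u1 ∈ A := by
    rw [Walk.support_reverse, List.mem_reverse] at hu1mem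
    exact (hA u1).mpr (hpa u1 hu1mem hu1adj.ne')
  have hu1S1 : u1 ∈ insert v A := Set.mem_insert_of_mem _ hu1A
  -- walks to v inside the complement of A
  have hS2walk : ∀ z, z ∉ A → z ≠ v → ∃ p : G.Walk z v, ∀ w ∈ p.support, w ∉ A := by
    intro z hzA hzv
    obtain ⟨p, hp⟩ := walk_to_v hconn z v
    refine ⟨p, fun w hw hwA => ?_⟩
    by_cases hwv : w = v
    · exact hvA (hwv ▸ hwA)
    · obtain ⟨q, hq⟩ := hp w hw hwv
      obtain ⟨r, hr⟩ := (hA w).mp hwA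
      refine hzA ((hA z).mpr ⟨r.append q.reverse, fun t ht => ?_⟩)
      rcases (Walk.mem_support_append_iff _ _).mp ht with h | h
      · exact hr t h
      · exact hq t (by rwa [Walk.support_reverse, List.mem_reverse] at h)
  have hvS2 : v ∈ (Aᶜ : Set V) := hvA
  -- neighbor of v inside Aᶜ (other than v)
  obtain ⟨pb, hpb⟩ := hS2walk b hbA hbv
  obtain ⟨u2, hu2adj, hu2mem⟩ := exists_nbr pb.reverse (Ne.symm hbv)
  have hu2A : u2 ∉ A := by
    rw [Walk.support_reverse, List.mem_reverse] at hu2mem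
    exact hpb u2 hu2mem
  have hu2v : u2 ≠ v := hu2adj.ne'
  have hu2S2 : u2 ∈ (Aᶜ : Set V) := hu2A
  -- connectivity of both sides
  have hS1conn : (G.induce (insert v A)).Connected := by
    rw [connected_iff]
    refine ⟨?_, ⟨⟨v, hvS1⟩⟩⟩
    have key : ∀ x : ↥(insert v A : Set V),
        (G.induce (insert v A)).Reachable ⟨a, haS1⟩ x := by
      rintro ⟨u, hu⟩
      rcases Set.mem_insert_iff.mp hu with rfl | huA
      · exact reachable_induce_of_walk pa hpaS1 haS1 hvS1
      · obtain ⟨p, hp⟩ := (hA u).mp huA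
        exact reachable_induce_of_walk p
          (fun w hw => Set.mem_insert_of_mem _
            ((hA w).mpr ⟨p.takeUntil w hw,
              fun t ht => hp t (p.support_takeUntil_subset hw ht)⟩))
          haS1 (Set.mem_insert_of_mem _ huA)
    exact fun x y => (key x).symm.trans (key y)
  have hS2conn : (G.induce (Aᶜ : Set V)).Connected := by
    rw [connected_iff]
    refine ⟨?_, ⟨⟨v, hvS2⟩⟩⟩
    have key : ∀ x : ↥(Aᶜ : Set V), (G.induce (Aᶜ : Set V)).Reachable x ⟨v, hvS2⟩ := by
      rintro ⟨u, hu⟩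
      by_cases huv : u = v
      · subst huv; rfl
      · obtain ⟨p, hp⟩ := hS2walk u hu huv
        exact reachable_induce_of_walk p (fun w hw => hp w hw) hu hvS2
    exact fun x y => (key x).trans (key y).symm
  -- both sides have strictly fewer edges
  have hS1lt : (G.induce (insert v A)).edgeSet.ncard < G.edgeSet.ncard := by
    refine edge_ncard_lt hu2adj ?_
    simp only [Set.mem_insert_iff, not_or]
    exact ⟨hu2v, hu2A⟩
  have hS2lt : (G.induce (Aᶜ : Set V)).edgeSet.ncard < G.edgeSet.ncard :=
    edge_ncard_lt hu1adj (fun h => h hu1A)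
  -- minimality dichotomy
  have dicho : ∀ (S : Set V), (G.induce S).Connected →
      (G.induce S).edgeSet.ncard < G.edgeSet.ncard →
      Nonempty ((G.induce S) ≃g cycleGraph 5) ∨ DynamicColorable (G.induce S) 4 := by
    intro S hSc hSlt
    by_cases h1 : Nonempty ((G.induce S) ≃g cycleGraph 5)
    · exact Or.inl h1
    right
    by_contra h2
    have := hmin ↥S (G.induce S)
      ⟨hSc, fun hm => hminor (hasMinor_of_induce hm), h1, h2⟩
    omega
  -- neighborhood closure for both sides
  have hcl1 : ∀ x : ↥(insert v A : Set V), x.1 ≠ v → G.neighborSet x.1 ⊆ insert v A := by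
    rintro ⟨u, hu⟩ huv w hw
    have huA : u ∈ A := (Set.mem_insert_iff.mp hu).resolve_left huv
    by_cases hwv : w = v
    · exact hwv ▸ hvS1
    · exact Set.mem_insert_of_mem _ (cross huA hw hwv)
  have hcl2 : ∀ x : ↥(Aᶜ : Set V), x.1 ≠ v → G.neighborSet x.1 ⊆ (Aᶜ : Set V) := by
    rintro ⟨u, hu⟩ huv w hw hwA
    exact hu (cross hwA (G.adj_symm hw) huv)
  obtain ⟨c1, hc1p, hc1d⟩ := side_coloring hvS1 hcl1 (dicho _ hS1conn hS1lt)
  obtain ⟨c2, hc2p, hc2d⟩ := side_coloring hvS2 hcl2 (dicho _ hS2conn hS2lt)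
  obtain ⟨σ, hσ1, hσ2⟩ := perm_exists (c2 ⟨v, hvS2⟩) (c1 ⟨v, hvS1⟩)
    (c2 ⟨u2, hu2S2⟩) (c1 ⟨u1, hu1S1⟩)
    (hc2p ⟨u2, hu2S2⟩ ⟨v, hvS2⟩ (G.adj_symm hu2adj))
  -- the combined coloring
  obtain ⟨c, hcA, hcB⟩ : ∃ c : V → Fin 4,
      (∀ x : ↥(insert v A : Set V), c x.1 = c1 x) ∧
      (∀ x : ↥(Aᶜ : Set V), c x.1 = σ (c2 x)) := by
    refine ⟨fun u => if h : u ∈ A then c1 ⟨u, Set.mem_insert_of_mem _ h⟩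
      else σ (c2 ⟨u, h⟩), ?_, ?_⟩
    · rintro ⟨u, hu⟩
      rcases Set.mem_insert_iff.mp hu with rfl | h
      · exact (dif_neg hvA).trans hσ1
      · exact dif_pos h
    · rintro ⟨u, hu⟩
      exact dif_neg hu
  have hprop : ∀ x y : V, G.Adj x y → c x ≠ c y := by
    intro x0 y0 hxy0
    by_cases hx : x0 ∈ A <;> by_cases hy : y0 ∈ A
    · have e1 : c x0 = c1 ⟨x0, Set.mem_insert_of_mem _ hx⟩ :=
        hcA ⟨x0, Set.mem_insert_of_mem _ hx⟩
      have e2 : c y0 = c1 ⟨y0, Set.mem_insert_of_mem _ hy⟩ :=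
        hcA ⟨y0, Set.mem_insert_of_mem _ hy⟩
      rw [e1, e2]
      exact hc1p _ _ hxy0
    · by_cases hyv : y0 = v
      · have e1 : c x0 = c1 ⟨x0, Set.mem_insert_of_mem _ hx⟩ :=
          hcA ⟨x0, Set.mem_insert_of_mem _ hx⟩
        have e2 : c y0 = c1 ⟨y0, hyv ▸ hvS1⟩ := hcA ⟨y0, hyv ▸ hvS1⟩
        rw [e1, e2]
        exact hc1p _ _ hxy0
      · exact absurd (cross hx hxy0 hyv) hy
    · by_cases hxv : x0 = v
      · have e1 : c x0 = c1 ⟨x0, hxv ▸ hvS1⟩ := hcA ⟨x0, hxv ▸ hvS1⟩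
        have e2 : c y0 = c1 ⟨y0, Set.mem_insert_of_mem _ hy⟩ :=
          hcA ⟨y0, Set.mem_insert_of_mem _ hy⟩
        rw [e1, e2]
        exact hc1p _ _ hxy0
      · exact absurd (cross hy (G.adj_symm hxy0) hxv) hx
    · have e1 : c x0 = σ (c2 ⟨x0, hx⟩) := hcB ⟨x0, hx⟩
      have e2 : c y0 = σ (c2 ⟨y0, hy⟩) := hcB ⟨y0, hy⟩
      rw [e1, e2]
      exact fun h => hc2p ⟨x0, hx⟩ ⟨y0, hy⟩ hxy0 (σ.injective h)
  have hdynG : ∀ z : V, 2 ≤ (G.neighborSet z).ncard →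
      ∃ u w : V, G.Adj z u ∧ G.Adj z w ∧ c u ≠ c w := by
    intro z hz2
    by_cases hzv : z = v
    · subst hzv
      refine ⟨u1, u2, hu1adj, hu2adj, ?_⟩
      have e1 : c u1 = c1 ⟨u1, hu1S1⟩ := hcA ⟨u1, hu1S1⟩
      have e2 : c u2 = σ (c2 ⟨u2, hu2S2⟩) := hcB ⟨u2, hu2S2⟩
      rw [e1, e2]
      exact fun h => hσ2 h.symm
    by_cases hzA : z ∈ A
    · obtain ⟨y1, z1, hy1, hz1, hyz1⟩ := hc1d ⟨z, Set.mem_insert_of_mem _ hzA⟩ hzv hz2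
      refine ⟨y1.1, z1.1, hy1, hz1, fun h => ?_⟩
      rw [hcA y1, hcA z1] at h
      exact hyz1 h
    · obtain ⟨y1, z1, hy1, hz1, hyz1⟩ := hc2d ⟨z, hzA⟩ hzv hz2
      refine ⟨y1.1, z1.1, hy1, hz1, fun h => ?_⟩
      rw [hcB y1, hcB z1] at h
      exact hyz1 (σ.injective h)
  exact hdyn ⟨c, hprop, hdynG⟩
end

section
/- Let k ≥ 1 be an integer and let G be a simple graph such that every topological minor of G has a vertex of degree at most k. Then G is dynamically (k+3)-colorable. -/
open SimpleGraph

/-- The graph obtained from `G` by subdividing the edge `uv` once: the edge `uv` is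
removed and the new vertex `Fin.last n` is joined to `u` and `v`. -/
def subdivideEdge {n : ℕ} (G : SimpleGraph (Fin n)) (u v : Fin n) :
    SimpleGraph (Fin (n + 1)) :=
  SimpleGraph.fromRel fun a b =>
    (∃ x y : Fin n, a = x.castSucc ∧ b = y.castSucc ∧ G.Adj x y ∧ s(x, y) ≠ s(u, v)) ∨
      (a = Fin.last n ∧ (b = u.castSucc ∨ b = v.castSucc))

/-- `IsSubdivision H G` means `G` is obtained from `H` by repeatedly subdividing edges. -/
inductive IsSubdivision : {n m : ℕ} → SimpleGraph (Fin n) → SimpleGraph (Fin m) → Prop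
  | refl {n : ℕ} (G : SimpleGraph (Fin n)) : IsSubdivision G G
  | step {n m : ℕ} {H : SimpleGraph (Fin n)} {G : SimpleGraph (Fin m)} {u v : Fin m}
      (huv : G.Adj u v) (h : IsSubdivision H G) : IsSubdivision H (subdivideEdge G u v)

/-- `H` is a topological minor of `G` if `G` has a subgraph isomorphic to a
subdivision of `H`, i.e. some subdivision of (a copy of) `H` admits an injective
graph homomorphism into `G`. -/
def IsTopologicalMinor {W V : Type} [Fintype W] (H : SimpleGraph W) (G : SimpleGraph V) :
    Prop :=
  ∃ (n m : ℕ) (H' : SimpleGraph (Fin n)) (S : SimpleGraph (Fin m)),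
    Nonempty (H ≃g H') ∧ IsSubdivision H' S ∧ ∃ f : S →g G, Function.Injective f


/-- Transfer lemma: a topological minor of `H` (the graph on `V \ {v}` which is
`G - v` possibly plus one extra edge `xy` between non-adjacent neighbors of `v`)
is a topological minor of `G`. -/
lemma topminor_transfer {V : Type} (G : SimpleGraph V) (v x y : V)
    (H : SimpleGraph {w : V // w ≠ v})
    (hH : ∀ a b, H.Adj a b → G.Adj ↑a ↑b ∨
      ((¬G.Adj x y ∧ G.Adj v x ∧ G.Adj v y ∧ x ≠ y) ∧
        (((a : V) = x ∧ (b : V) = y) ∨ ((a : V) = y ∧ (b : V) = x))))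
    {W : Type} [Fintype W] (H₀ : SimpleGraph W) (hm : IsTopologicalMinor H₀ H) :
    IsTopologicalMinor H₀ G := by
  obtain ⟨n', m, H', S, iso, sub, f, finj⟩ := hm
  by_cases hP : ¬G.Adj x y ∧ G.Adj v x ∧ G.Adj v y ∧ x ≠ y
  · by_cases hc : ∃ a b : Fin m, S.Adj a b ∧ (f a : V) = x ∧ (f b : V) = y
    · obtain ⟨a, b, hab, hfa, hfb⟩ := hc
      refine ⟨n', m + 1, H', subdivideEdge S a b, iso, .step hab sub, ?_⟩
      have key : ∀ p q : Fin m,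
          S.Adj p q → s(p, q) ≠ s(a, b) → G.Adj ↑(f p) ↑(f q) := by
        intro p q hpq hne
        rcases hH _ _ (f.map_rel hpq) with hg | ⟨_, hcase⟩
        · exact hg
        · exfalso
          rcases hcase with ⟨h1, h2⟩ | ⟨h1, h2⟩
          · have hpa : p = a := finj (Subtype.val_injective (h1.trans hfa.symm))
            have hqb : q = b := finj (Subtype.val_injective (h2.trans hfb.symm))
            exact hne (by rw [hpa, hqb])
          · have hpb : p = b := finj (Subtype.val_injective (h1.trans hfb.symm))
            have hqa : q = a := finj (Subtype.val_injective (h2.trans hfa.symm))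
            exact hne (by rw [hpb, hqa, Sym2.eq_swap])
      set g : Fin (m + 1) → V := Fin.lastCases v (fun z => ↑(f z)) with hg
      have hgc : ∀ z : Fin m, g z.castSucc = ↑(f z) := fun z => Fin.lastCases_castSucc ..
      have hgl : g (Fin.last m) = v := Fin.lastCases_last ..
      have hrel : ∀ p q : Fin (m + 1),
          ((∃ x' y' : Fin m, p = x'.castSucc ∧ q = y'.castSucc ∧ S.Adj x' y' ∧
            s(x', y') ≠ s(a, b)) ∨ (p = Fin.last m ∧ (q = a.castSucc ∨ q = b.castSucc))) →
          G.Adj (g p) (g q) := by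
        rintro p q (⟨x', y', rfl, rfl, hxy', hne⟩ | ⟨rfl, rfl | rfl⟩)
        · rw [hgc, hgc]; exact key _ _ hxy' hne
        · rw [hgl, hgc, hfa]; exact hP.2.1
        · rw [hgl, hgc, hfb]; exact hP.2.2.1
      refine ⟨⟨g, ?_⟩, ?_⟩
      · intro p q hpq
        rw [subdivideEdge, SimpleGraph.fromRel_adj] at hpq
        rcases hpq.2 with h | h
        · exact hrel _ _ h
        · exact (hrel _ _ h).symm
      · intro p q hpq0
        have hpq : g p = g q := hpq0
        induction p using Fin.lastCases with
        | last =>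
          induction q using Fin.lastCases with
          | last => rfl
          | cast z =>
            exfalso; rw [hgl, hgc] at hpq; exact (f z).2 hpq.symm
        | cast z =>
          induction q using Fin.lastCases with
          | last => exfalso; rw [hgl, hgc] at hpq; exact (f z).2 hpq
          | cast z' =>
            rw [hgc, hgc] at hpq
            exact congrArg Fin.castSucc (finj (Subtype.val_injective hpq))
    · refine ⟨n', m, H', S, iso, sub, ⟨fun z => ↑(f z), ?_⟩, ?_⟩
      · intro p q hpq
        rcases hH _ _ (f.map_rel hpq) with hg | ⟨_, hcase⟩
        · exact hg
        · exfalso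
          rcases hcase with ⟨h1, h2⟩ | ⟨h1, h2⟩
          · exact hc ⟨p, q, hpq, h1, h2⟩
          · exact hc ⟨q, p, hpq.symm, h2, h1⟩
      · exact fun p q hpq => finj (Subtype.val_injective hpq)
  · refine ⟨n', m, H', S, iso, sub, ⟨fun z => ↑(f z), ?_⟩, ?_⟩
    · intro p q hpq
      rcases hH _ _ (f.map_rel hpq) with hg | ⟨hP', _⟩
      · exact hg
      · exact absurd hP' hP
    · exact fun p q hpq => finj (Subtype.val_injective hpq)

lemma ncard_nbr_eq_degree {V : Type} [Fintype V] (G : SimpleGraph V) [DecidableRel G.Adj]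
    (v : V) : (G.neighborSet v).ncard = G.degree v := by
  rw [SimpleGraph.degree, SimpleGraph.neighborFinset_def, Set.ncard_eq_toFinset_card']

lemma aux_main (k : ℕ) :
    ∀ (N : ℕ) (V : Type) [Fintype V] (G : SimpleGraph V),
      (∀ (n : ℕ) (H : SimpleGraph (Fin (n + 1))),
        IsTopologicalMinor H G → ∃ v : Fin (n + 1), (H.neighborSet v).ncard ≤ k) →
      Fintype.card V = N → DynamicColorable G (k + 3) := by
  intro N
  induction N using Nat.strong_induction_on with
  | _ N IH =>
  intro V instV G h hcard
  classical
  rcases isEmpty_or_nonempty V with hV | hV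
  · exact ⟨fun _ => ⟨0, by omega⟩, fun u => (IsEmpty.false u).elim,
      fun w => (IsEmpty.false w).elim⟩
  obtain ⟨v, -, hmin⟩ := Finset.exists_min_image Finset.univ (fun w => G.degree w)
    ⟨Classical.arbitrary V, Finset.mem_univ _⟩
  simp only [Finset.mem_univ, forall_true_left] at hmin
  set d := G.degree v with hd
  -- the minimum degree is at most k
  have hdk : d ≤ k := by
    obtain ⟨n, hn⟩ : ∃ n, Fintype.card V = n + 1 :=
      ⟨Fintype.card V - 1, (Nat.succ_pred_eq_of_pos Fintype.card_pos).symm⟩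
    let e : V ≃ Fin (n + 1) := Fintype.equivFinOfCardEq hn
    let H₁ : SimpleGraph (Fin (n + 1)) := SimpleGraph.comap e.symm G
    have htm : IsTopologicalMinor H₁ G :=
      ⟨n + 1, n + 1, H₁, H₁, ⟨SimpleGraph.Iso.refl⟩, .refl H₁,
        ⟨⟨e.symm, fun hab => hab⟩, e.symm.injective⟩⟩
    obtain ⟨w, hw⟩ := h n H₁ htm
    have himg : e.symm '' (H₁.neighborSet w) = G.neighborSet (e.symm w) := by
      ext u
      constructor
      · rintro ⟨u', hu', rfl⟩; exact hu'
      · intro hu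
        refine ⟨e u, ?_, e.symm_apply_apply u⟩
        show G.Adj (e.symm w) (e.symm (e u))
        rwa [e.symm_apply_apply]
    have : (G.neighborSet (e.symm w)).ncard ≤ k := by
      rw [← himg, Set.ncard_image_of_injective _ e.symm.injective]; exact hw
    calc d ≤ G.degree (e.symm w) := hmin _
      _ = (G.neighborSet (e.symm w)).ncard := (ncard_nbr_eq_degree G _).symm
      _ ≤ k := this
  -- choose the pair x y
  obtain ⟨x, y, hW1, hW3⟩ : ∃ x y : V,
      (2 ≤ d → G.Adj v x ∧ G.Adj v y ∧ x ≠ y) ∧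
      (∀ w, G.Adj v w → w ≠ x → w ≠ y → 3 ≤ d) := by
    by_cases h2 : 2 ≤ d
    · obtain ⟨x, hxm, y, hym, hxy⟩ := Finset.one_lt_card.mp h2
      have hax := (G.mem_neighborFinset v x).mp hxm
      have hay := (G.mem_neighborFinset v y).mp hym
      refine ⟨x, y, fun _ => ⟨hax, hay, hxy⟩, fun w hw hwx hwy => ?_⟩
      by_contra hlt
      have hd2 : d = 2 := by omega
      have hsub : ({x, y} : Finset V) ⊆ G.neighborFinset v := by
        intro z hz
        rcases Finset.mem_insert.mp hz with rfl | hz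
        · exact hxm
        · rw [Finset.mem_singleton.mp hz]; exact hym
      have hcard2 : (G.neighborFinset v).card ≤ ({x, y} : Finset V).card := by
        have hdeg : (G.neighborFinset v).card = d := hd.symm
        rw [Finset.card_pair hxy]; omega
      have heq := Finset.eq_of_subset_of_card_le hsub hcard2
      have : w ∈ ({x, y} : Finset V) := by
        rw [heq]; exact (G.mem_neighborFinset v w).mpr hw
      rcases Finset.mem_insert.mp this with rfl | hz
      · exact hwx rfl
      · exact hwy (Finset.mem_singleton.mp hz)
    · by_cases h1 : d = 1
      · obtain ⟨x, hxs⟩ := Finset.card_eq_one.mp h1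
        have hax : G.Adj v x := (G.mem_neighborFinset v x).mp
          (hxs ▸ Finset.mem_singleton_self x)
        refine ⟨x, x, fun h2' => absurd h2' h2, fun w hw hwx _ => ?_⟩
        exact absurd (Finset.mem_singleton.mp
          (hxs ▸ (G.mem_neighborFinset v w).mpr hw)) hwx
      · have h0 : d = 0 := by omega
        refine ⟨v, v, fun h2' => by omega, fun w hw _ _ => ?_⟩
        have : w ∈ G.neighborFinset v := (G.mem_neighborFinset v w).mpr hw
        rw [Finset.card_eq_zero.mp h0] at this
        exact absurd this (Finset.notMem_empty w)
  -- the smaller graph H on V' = V \ {v}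
  let H : SimpleGraph {w : V // w ≠ v} := SimpleGraph.fromRel
    (fun a b => G.Adj ↑a ↑b ∨
      ((¬G.Adj x y ∧ G.Adj v x ∧ G.Adj v y ∧ x ≠ y) ∧ (a : V) = x ∧ (b : V) = y))
  have hAdjIff : ∀ a b : {w : V // w ≠ v}, H.Adj a b ↔
      (G.Adj ↑a ↑b ∨ ((¬G.Adj x y ∧ G.Adj v x ∧ G.Adj v y ∧ x ≠ y) ∧
        (((a : V) = x ∧ (b : V) = y) ∨ ((a : V) = y ∧ (b : V) = x)))) := by
    intro a b
    rw [SimpleGraph.fromRel_adj]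
    constructor
    · rintro ⟨hne, (hg | ⟨hp, h1, h2⟩) | (hg | ⟨hp, h1, h2⟩)⟩
      · exact Or.inl hg
      · exact Or.inr ⟨hp, Or.inl ⟨h1, h2⟩⟩
      · exact Or.inl hg.symm
      · exact Or.inr ⟨hp, Or.inr ⟨h2, h1⟩⟩
    · rintro (hg | ⟨hp, ⟨h1, h2⟩ | ⟨h1, h2⟩⟩)
      · exact ⟨fun e => G.irrefl (e ▸ hg), Or.inl (Or.inl hg)⟩
      · refine ⟨fun e => hp.2.2.2 ?_, Or.inl (Or.inr ⟨hp, h1, h2⟩)⟩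
        rw [← h1, ← h2, e]
      · refine ⟨fun e => hp.2.2.2 ?_, Or.inr (Or.inr ⟨hp, h2, h1⟩)⟩
        rw [← h1, ← h2, e]
  have hH' : ∀ (n : ℕ) (H₀ : SimpleGraph (Fin (n + 1))),
      IsTopologicalMinor H₀ H → ∃ w : Fin (n + 1), (H₀.neighborSet w).ncard ≤ k := by
    intro n H₀ hm
    refine h n H₀ (topminor_transfer G v x y H ?_ H₀ hm)
    intro a b hab
    exact (hAdjIff a b).mp hab
  have hcard' : Fintype.card {w : V // w ≠ v} < N := by
    have h1 : Fintype.card {w : V // w ≠ v} = Fintype.card V - 1 := by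
      have := Fintype.card_subtype_compl (fun w : V => w = v)
      rw [Fintype.card_subtype_eq] at this
      exact this
    have := Fintype.card_pos (α := V)
    omega
  obtain ⟨c', hc'⟩ := IH _ hcard' {w : V // w ≠ v} H hH' rfl
  -- extend the coloring
  let c₁ : V → Fin (k + 3) := fun w => if hw : w = v then ⟨0, by omega⟩ else c' ⟨w, hw⟩
  let O : V → Finset V := fun u => (G.neighborFinset u).erase v
  let β : V → Fin (k + 3) := fun u =>
    if hu : (O u).Nonempty then c₁ hu.choose else ⟨0, by omega⟩
  let F : Finset (Fin (k + 3)) := (G.neighborFinset v).image c₁ ∪ {β x, β y}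
  have hFcard : F.card < k + 3 := by
    have h1 := Finset.card_union_le ((G.neighborFinset v).image c₁)
      ({β x, β y} : Finset (Fin (k + 3)))
    have h2 := Finset.card_image_le (s := G.neighborFinset v) (f := c₁)
    have h3 : ({β x, β y} : Finset (Fin (k + 3))).card ≤ 2 := by
      refine le_trans (Finset.card_insert_le _ _) ?_
      rw [Finset.card_singleton]
    have hdeg : (G.neighborFinset v).card = d := hd.symm
    have hF : F.card ≤ ((G.neighborFinset v).image c₁).card +
        ({β x, β y} : Finset (Fin (k + 3))).card := h1
    omega
  have hex : ∃ γ : Fin (k + 3), γ ∉ F := by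
    have hpos : 0 < Fᶜ.card := by
      rw [Finset.card_compl, Fintype.card_fin]; omega
    obtain ⟨γ, hγ⟩ := Finset.card_pos.mp hpos
    exact ⟨γ, Finset.mem_compl.mp hγ⟩
  obtain ⟨γ, hγF⟩ := hex
  let c : V → Fin (k + 3) := fun w => if hw : w = v then γ else c' ⟨w, hw⟩
  have hcv : c v = γ := dif_pos rfl
  have hcu : ∀ u : {w : V // w ≠ v}, c ↑u = c' u := fun u => dif_neg u.2
  have hc₁ : ∀ w, (hw : w ≠ v) → c₁ w = c w := by
    intro w hw
    show dite _ _ _ = dite _ _ _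
    rw [dif_neg hw, dif_neg hw]
  have hmemF : ∀ w, G.Adj v w → c w ∈ F := by
    intro w hw
    have hmem : c₁ w ∈ (G.neighborFinset v).image c₁ :=
      Finset.mem_image_of_mem _ ((G.mem_neighborFinset v w).mpr hw)
    rw [hc₁ w hw.ne'] at hmem
    exact Finset.mem_union_left _ hmem
  refine ⟨c, ?_, ?_⟩
  · -- properness
    intro a b hab
    by_cases hav : a = v
    · subst hav
      have hbf := hmemF b hab
      rw [hcv]; intro e; rw [← e] at hbf; exact hγF hbf
    · by_cases hbv : b = v
      · subst hbv
        have haf := hmemF a hab.symm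
        rw [hcv]; intro e; rw [e] at haf; exact hγF haf
      · have hH : H.Adj ⟨a, hav⟩ ⟨b, hbv⟩ := (hAdjIff _ _).mpr (Or.inl hab)
        have hne := hc'.1 _ _ hH
        rwa [← hcu ⟨a, hav⟩, ← hcu ⟨b, hbv⟩] at hne
  · -- dynamic condition
    intro w hw2
    have hdeg2 : 2 ≤ G.degree w := by
      rw [← ncard_nbr_eq_degree]; exact hw2
    by_cases hwv : w = v
    · rw [hwv] at hdeg2
      rw [hwv]
      obtain ⟨hax, hay, hxy⟩ := hW1 (by rw [hd]; exact hdeg2)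
      refine ⟨x, y, hax, hay, ?_⟩
      have hxv : x ≠ v := hax.ne'
      have hyv : y ≠ v := hay.ne'
      have hH : H.Adj ⟨x, hxv⟩ ⟨y, hyv⟩ := by
        refine (hAdjIff _ _).mpr ?_
        by_cases hxyadj : G.Adj x y
        · exact Or.inl hxyadj
        · exact Or.inr ⟨⟨hxyadj, hax, hay, hxy⟩, Or.inl ⟨rfl, rfl⟩⟩
      have hne := hc'.1 _ _ hH
      rwa [← hcu ⟨x, hxv⟩, ← hcu ⟨y, hyv⟩] at hne
    · by_cases hadjvw : G.Adj v w
      · by_cases hwxy : w = x ∨ w = y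
        · have hvm : v ∈ G.neighborFinset w := (G.mem_neighborFinset w v).mpr hadjvw.symm
          have hOne : (O w).Nonempty := by
            rw [← Finset.card_pos]
            have hce := Finset.card_erase_of_mem hvm
            have hdw : 2 ≤ (G.neighborFinset w).card := hdeg2
            show 0 < ((G.neighborFinset w).erase v).card
            omega
          have hom : hOne.choose ∈ O w := hOne.choose_spec
          have hov : hOne.choose ≠ v := Finset.ne_of_mem_erase hom
          have hwo : G.Adj w hOne.choose :=
            (G.mem_neighborFinset w _).mp (Finset.mem_of_mem_erase hom)
          refine ⟨v, hOne.choose, hadjvw.symm, hwo, ?_⟩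
          have hβ : β w = c₁ hOne.choose := dif_pos hOne
          have hβF : β w ∈ F := by
            rcases hwxy with rfl | rfl
            · exact Finset.mem_union_right _ (Finset.mem_insert_self _ _)
            · exact Finset.mem_union_right _
                (Finset.mem_insert_of_mem (Finset.mem_singleton_self _))
          rw [hcv]
          intro e
          rw [hβ, hc₁ _ hov, ← e] at hβF
          exact hγF hβF
        · push_neg at hwxy
          have h3 : 3 ≤ d := hW3 w hadjvw hwxy.1 hwxy.2
          have hdegw : 3 ≤ (G.neighborFinset w).card := le_trans h3 (hmin w)
          have hvm : v ∈ G.neighborFinset w := (G.mem_neighborFinset w v).mpr hadjvw.symm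
          have hOcard : 2 ≤ (O w).card := by
            show 2 ≤ ((G.neighborFinset w).erase v).card
            rw [Finset.card_erase_of_mem hvm]; omega
          have hsub : ((O w : Finset V) : Set V) ⊆
              Subtype.val '' (H.neighborSet ⟨w, hwv⟩) := by
            intro o ho
            have ho' := Finset.mem_coe.mp ho
            have hov : o ≠ v := Finset.ne_of_mem_erase ho'
            have hwo : G.Adj w o := (G.mem_neighborFinset w o).mp (Finset.mem_of_mem_erase ho')
            exact ⟨⟨o, hov⟩, (hAdjIff _ _).mpr (Or.inl hwo), rfl⟩
          have h2H : 2 ≤ (H.neighborSet ⟨w, hwv⟩).ncard := by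
            have hle := Set.ncard_le_ncard hsub (Set.toFinite _)
            rw [Set.ncard_coe_finset] at hle
            have hni := Set.ncard_image_of_injective (H.neighborSet ⟨w, hwv⟩)
              Subtype.val_injective
            omega
          obtain ⟨u₁, u₂, ha1, ha2, hcc⟩ := hc'.2 ⟨w, hwv⟩ h2H
          have hmap : ∀ u : {z : V // z ≠ v}, H.Adj ⟨w, hwv⟩ u → G.Adj w ↑u := by
            intro u hu
            rcases (hAdjIff _ _).mp hu with hg | ⟨hp, hcase⟩
            · exact hg
            · exfalso; rcases hcase with ⟨h1, _⟩ | ⟨h1, _⟩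
              · exact hwxy.1 (show w = x from h1)
              · exact hwxy.2 (show w = y from h1)
          refine ⟨↑u₁, ↑u₂, hmap u₁ ha1, hmap u₂ ha2, ?_⟩
          rw [hcu u₁, hcu u₂]; exact hcc
      · have himg : Subtype.val '' (H.neighborSet ⟨w, hwv⟩) = G.neighborSet w := by
          ext u
          constructor
          · rintro ⟨u', hu', rfl⟩
            rcases (hAdjIff _ _).mp hu' with hg | ⟨hp, hcase⟩
            · exact hg
            · exfalso; rcases hcase with ⟨h1, _⟩ | ⟨h1, _⟩
              · exact hadjvw (by rw [show w = x from h1]; exact hp.2.1)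
              · exact hadjvw (by rw [show w = y from h1]; exact hp.2.2.1)
          · intro hu
            have huv : u ≠ v := by rintro rfl; exact hadjvw hu.symm
            exact ⟨⟨u, huv⟩, (hAdjIff _ _).mpr (Or.inl hu), rfl⟩
        have h2H : 2 ≤ (H.neighborSet ⟨w, hwv⟩).ncard := by
          have hni := Set.ncard_image_of_injective (H.neighborSet ⟨w, hwv⟩)
            Subtype.val_injective
          rw [himg] at hni
          rw [← hni]; exact hw2
        obtain ⟨u₁, u₂, ha1, ha2, hcc⟩ := hc'.2 ⟨w, hwv⟩ h2H
        have hmap : ∀ u : {z : V // z ≠ v}, H.Adj ⟨w, hwv⟩ u → G.Adj w ↑u := by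
          intro u hu
          rcases (hAdjIff _ _).mp hu with hg | ⟨hp, hcase⟩
          · exact hg
          · exfalso; rcases hcase with ⟨h1, _⟩ | ⟨h1, _⟩
            · exact hadjvw (by rw [show w = x from h1]; exact hp.2.1)
            · exact hadjvw (by rw [show w = y from h1]; exact hp.2.2.1)
        refine ⟨↑u₁, ↑u₂, hmap u₁ ha1, hmap u₂ ha2, ?_⟩
        rw [hcu u₁, hcu u₂]; exact hcc


/-- If every (nonempty) topological minor of `G` has a vertex of degree at most `k`,
then `G` is dynamically `(k + 3)`-colorable. -/
theorem dynamic_colorable_of_topological_minor_degree {V : Type} [Fintype V]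
    (G : SimpleGraph V) (k : ℕ) (hk : 1 ≤ k)
    (h : ∀ (n : ℕ) (H : SimpleGraph (Fin (n + 1))),
      IsTopologicalMinor H G → ∃ v : Fin (n + 1), (H.neighborSet v).ncard ≤ k) :
    DynamicColorable G (k + 3) :=
  aux_main k (Fintype.card V) V G h rfl
end

section
/- For every n ≥ 1, if G is the graph obtained from the complete graph K_n by subdividing every edge exactly once, then the dynamic chromatic number of G is at least n (while G is 2-degenerate). -/
open SimpleGraph

/-- The dynamic chromatic number: the least `k` such that `G` is dynamically `k`-colorable. -/
noncomputable def dynamicChromaticNumber {V : Type} (G : SimpleGraph V) : ℕ :=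
  sInf {k : ℕ | DynamicColorable G k}

/-- The graph obtained from the complete graph `K n` by subdividing every edge exactly
once: its vertices are the `n` original vertices together with one vertex for each
edge of `K n`, a subdivision vertex being adjacent exactly to the two ends of its edge. -/
def subdividedComplete (n : ℕ) :
    SimpleGraph (Fin n ⊕ {p : Fin n × Fin n // p.1 < p.2}) :=
  SimpleGraph.fromRel fun a b =>
    match a, b with
    | Sum.inl v, Sum.inr e => v = e.val.1 ∨ v = e.val.2
    | _, _ => False

lemma sc_adj_inr (n : ℕ) (e : {p : Fin n × Fin n // p.1 < p.2})
    (x : Fin n ⊕ {p : Fin n × Fin n // p.1 < p.2}) :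
    (subdividedComplete n).Adj (Sum.inr e) x ↔ x = Sum.inl e.val.1 ∨ x = Sum.inl e.val.2 := by
  cases x with
  | inl v => simp [subdividedComplete, SimpleGraph.fromRel_adj]
  | inr f => simp [subdividedComplete, SimpleGraph.fromRel_adj]

lemma sc_not_adj_inl_inl (n : ℕ) (v w : Fin n) :
    ¬ (subdividedComplete n).Adj (Sum.inl v) (Sum.inl w) := by
  simp [subdividedComplete, SimpleGraph.fromRel_adj]

lemma sc_neighborSet_inr (n : ℕ) (e : {p : Fin n × Fin n // p.1 < p.2}) :
    (subdividedComplete n).neighborSet (Sum.inr e) =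
      {Sum.inl e.val.1, Sum.inl e.val.2} := by
  ext x
  simp [SimpleGraph.mem_neighborSet, sc_adj_inr, Set.mem_insert_iff]

/-- The graph obtained from `K n` by subdividing every edge once has dynamic chromatic
number at least `n`, while it is `2`-degenerate. -/
theorem subdivided_complete_dynamic_chromatic_number (n : ℕ) (hn : 1 ≤ n) :
    n ≤ dynamicChromaticNumber (subdividedComplete n) ∧
      ∀ H : (subdividedComplete n).Subgraph, H.verts.Nonempty →
        ∃ v ∈ H.verts, (H.neighborSet v).ncard ≤ 2 := by
  constructor
  · -- dynamic chromatic number ≥ n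
    have hne : {k : ℕ | DynamicColorable (subdividedComplete n) k}.Nonempty := by
      classical
      set V := Fin n ⊕ {p : Fin n × Fin n // p.1 < p.2}
      refine ⟨Fintype.card V, ?_⟩
      refine ⟨Fintype.equivFin V, ?_, ?_⟩
      · intro u v h hc
        exact h.ne ((Fintype.equivFin V).injective hc)
      · intro v hv
        have h2 : 1 < ((subdividedComplete n).neighborSet v).ncard := hv
        rw [Set.one_lt_ncard (Set.toFinite _)] at h2
        obtain ⟨a, ha, b, hb, hab⟩ := h2
        exact ⟨a, b, ha, hb, fun hc => hab ((Fintype.equivFin V).injective hc)⟩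
    apply le_csInf hne
    intro k hk
    obtain ⟨c, hproper, hdyn⟩ := hk
    -- the coloring restricted to original vertices is injective
    have key : ∀ u v : Fin n, u < v → c (Sum.inl u) ≠ c (Sum.inl v) := by
      intro u v h hc
      set e : {p : Fin n × Fin n // p.1 < p.2} := ⟨(u, v), h⟩ with he
      have hne : (Sum.inl u : Fin n ⊕ {p : Fin n × Fin n // p.1 < p.2}) ≠ Sum.inl v := by
        simp only [ne_eq, Sum.inl.injEq]
        exact h.ne
      have hcard : 2 ≤ ((subdividedComplete n).neighborSet (Sum.inr e)).ncard := by
        rw [sc_neighborSet_inr]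
        rw [Set.ncard_pair hne]
      obtain ⟨x, w, hx, hw, hxw⟩ := hdyn (Sum.inr e) hcard
      rw [sc_adj_inr] at hx hw
      rcases hx with hx | hx <;> rcases hw with hw | hw <;> subst hx <;> subst hw
      · exact hxw rfl
      · exact hxw hc
      · exact hxw hc.symm
      · exact hxw rfl
    have hinj : Function.Injective (fun v : Fin n => c (Sum.inl v)) := by
      intro u v hc
      by_contra huv
      rcases lt_or_gt_of_ne huv with h | h
      · exact key u v h hc
      · exact key v u h hc.symm
    have := Fintype.card_le_of_injective _ hinj
    simpa using this
  · -- 2-degeneracy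
    intro H ⟨v0, hv0⟩
    by_cases hex : ∃ e, Sum.inr e ∈ H.verts
    · obtain ⟨e, he⟩ := hex
      refine ⟨Sum.inr e, he, ?_⟩
      have hsub : H.neighborSet (Sum.inr e) ⊆
          {Sum.inl e.val.1, Sum.inl e.val.2} := by
        intro x hx
        have := H.adj_sub hx
        rwa [sc_adj_inr] at this
      calc (H.neighborSet (Sum.inr e)).ncard
          ≤ ({Sum.inl e.val.1, Sum.inl e.val.2} :
              Set (Fin n ⊕ {p : Fin n × Fin n // p.1 < p.2})).ncard :=
            Set.ncard_le_ncard hsub (Set.toFinite _)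
        _ ≤ 2 := Set.ncard_insert_le _ _ |>.trans (by simp [Set.ncard_singleton])
    · push_neg at hex
      refine ⟨v0, hv0, ?_⟩
      have : H.neighborSet v0 = ∅ := by
        ext x
        simp only [SimpleGraph.Subgraph.mem_neighborSet, Set.mem_empty_iff_false, iff_false]
        intro hadj
        have hxv : x ∈ H.verts := H.edge_vert hadj.symm
        cases x with
        | inr e => exact hex e hxv
        | inl w =>
          cases v0 with
          | inl u => exact sc_not_adj_inl_inl n u w (H.adj_sub hadj)
          | inr e => exact hex e hv0
      simp [this]
end

section
/- For every positive integer k, every cycle of length 3k+1 and every cycle of length 3k−1 (with 3k−1 ≥ 3) is not dynamically 3-colorable. -/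
open SimpleGraph

open Fin.CommRing in
lemma cycle_main (m j : ℕ) (hj : (3 * j) % (m + 3) = 1) :
    ¬ DynamicColorable (SimpleGraph.cycleGraph (m + 3)) 3 := by
  haveI : NeZero (m + 3) := ⟨by omega⟩
  rintro ⟨c, hp, hd⟩
  have hv1 : (1 : Fin (m + 3)).val = 1 := by
    rw [Fin.val_one', Nat.mod_eq_of_lt (by omega)]
  have adj_iff : ∀ u v : Fin (m + 3),
      (SimpleGraph.cycleGraph (m + 3)).Adj u v ↔ u - v = 1 ∨ v - u = 1 := by
    intro u v
    rw [cycleGraph_adj']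
    constructor
    · rintro (h | h)
      · exact Or.inl (Fin.ext (by rw [hv1]; exact h))
      · exact Or.inr (Fin.ext (by rw [hv1]; exact h))
    · rintro (h | h)
      · exact Or.inl (by rw [h, hv1])
      · exact Or.inr (by rw [h, hv1])
  have hiff : ∀ u v : Fin (m + 3),
      (SimpleGraph.cycleGraph (m + 3)).Adj v u ↔ u = v - 1 ∨ u = v + 1 := by
    intro u v
    rw [adj_iff]
    constructor
    · rintro (h | h)
      · exact Or.inl (by linear_combination -h)
      · exact Or.inr (by linear_combination h)
    · rintro (h | h)
      · exact Or.inl (by rw [h]; ring)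
      · exact Or.inr (by rw [h]; ring)
  have adj_succ : ∀ v : Fin (m + 3), (SimpleGraph.cycleGraph (m + 3)).Adj v (v + 1) :=
    fun v => (hiff _ _).mpr (Or.inr rfl)
  have h2 : (1 + 1 : Fin (m + 3)) ≠ 0 := by
    intro h
    have := congrArg Fin.val h
    rw [Fin.val_add, hv1, Fin.val_zero, Nat.mod_eq_of_lt (by omega)] at this
    omega
  have hne12 : ∀ v : Fin (m + 3), v - 1 ≠ v + 1 := by
    intro v h
    exact h2 (by linear_combination -h)
  have hns : ∀ v : Fin (m + 3),
      (SimpleGraph.cycleGraph (m + 3)).neighborSet v = {v - 1, v + 1} := by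
    intro v
    ext u
    simp only [mem_neighborSet, Set.mem_insert_iff, Set.mem_singleton_iff]
    exact hiff u v
  have stepA : ∀ v : Fin (m + 3), c (v - 1) ≠ c (v + 1) := by
    intro v
    obtain ⟨u, w, hu, hw, hne⟩ := hd v (by rw [hns v, Set.ncard_pair (hne12 v)])
    rcases (hiff u v).mp hu with h | h <;> rcases (hiff w v).mp hw with h' | h' <;>
      subst h <;> subst h'
    · exact absurd rfl hne
    · exact hne
    · exact hne.symm
    · exact absurd rfl hne
  have d1 : ∀ v : Fin (m + 3), c v ≠ c (v + 1) := fun v => hp v (v + 1) (adj_succ v)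
  have d2 : ∀ v : Fin (m + 3), c v ≠ c (v + 2) := by
    intro v
    have := stepA (v + 1)
    rwa [show v + 1 - 1 = v by ring, show v + 1 + 1 = v + 2 by ring] at this
  have pig : ∀ a b x y : Fin 3, a ≠ b → a ≠ x → b ≠ x → a ≠ y → b ≠ y → x = y := by decide
  have h3 : ∀ v : Fin (m + 3), c (v + 3) = c v := by
    intro v
    refine (pig (c (v + 1)) (c (v + 2)) (c v) (c (v + 3)) ?_ ?_ ?_ ?_ ?_).symm
    · have := d1 (v + 1); rwa [show v + 1 + 1 = v + 2 by ring] at this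
    · exact (d1 v).symm
    · exact (d2 v).symm
    · have := d2 (v + 1); rwa [show v + 1 + 2 = v + 3 by ring] at this
    · have := d1 (v + 2); rwa [show v + 2 + 1 = v + 3 by ring] at this
  have hper : ∀ (i : ℕ) (v : Fin (m + 3)), c (v + ((3 * i : ℕ) : Fin (m + 3))) = c v := by
    intro i
    induction i with
    | zero => intro v; simp
    | succ i ih =>
        intro v
        have e : ((3 * (i + 1) : ℕ) : Fin (m + 3)) = ((3 * i : ℕ) : Fin (m + 3)) + 3 := by
          push_cast; ring
        rw [e, ← add_assoc, h3 (v + ((3 * i : ℕ) : Fin (m + 3)))]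
        exact ih v
  have hcast : ((3 * j : ℕ) : Fin (m + 3)) = 1 := by
    apply Fin.ext
    rw [Fin.val_natCast, hj, hv1]
  have := hper j 0
  rw [hcast] at this
  exact d1 0 this.symm

/-- For every positive integer `k`, the cycle of length `3k + 1` is not dynamically
`3`-colorable, and neither is the cycle of length `3k - 1` provided `3k - 1 ≥ 3`. -/
theorem cycles_not_dynamically_three_colorable (k : ℕ) (hk : 1 ≤ k) :
    ¬ DynamicColorable (SimpleGraph.cycleGraph (3 * k + 1)) 3 ∧
      (3 ≤ 3 * k - 1 → ¬ DynamicColorable (SimpleGraph.cycleGraph (3 * k - 1)) 3) := by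
  constructor
  · obtain ⟨k', rfl⟩ : ∃ k', k = 1 + k' := ⟨k - 1, by omega⟩
    rw [show 3 * (1 + k') + 1 = (3 * k' + 1) + 3 by ring]
    apply cycle_main (3 * k' + 1) (2 * k' + 3)
    rw [show 3 * (2 * k' + 3) = 1 + (3 * k' + 1 + 3) * 2 by ring, Nat.add_mul_mod_self_left]
    exact Nat.mod_eq_of_lt (by omega)
  · intro h3
    obtain ⟨k'', rfl⟩ : ∃ k'', k = 2 + k'' := ⟨k - 2, by omega⟩
    rw [show 3 * (2 + k'') - 1 = (3 * k'' + 2) + 3 by omega]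
    apply cycle_main (3 * k'' + 2) (2 + k'')
    rw [show 3 * (2 + k'') = 1 + (3 * k'' + 2 + 3) * 1 by ring, Nat.add_mul_mod_self_left]
    exact Nat.mod_eq_of_lt (by omega)
end
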